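/- arXiv:1507.06944 — 5 statements merged into one kernel-verified Lean document; each statement's English description precedes it below -/
import Mathlib

section
/- The encoding n from binary trees to natural numbers, defined by n(x) = 0 and n(A ▸ B) = cons(n(A), n(B)), is a bijection between the set of binary trees and ℕ. -/
/-- Binary trees: a leaf `x` or a node with two children. -/
inductive BT where
  | leaf : BT
  | node : BT → BT → BT

/-- The `cons` operation on natural numbers. -/
def consNat (i j : ℕ) : ℕ :=
  if Odd j then 2 ^ (i + 1) * j else 2 ^ (i + 1) * (j + 1) - 1

/-- The encoding of binary trees as natural numbers. -/
def enc : BT → ℕ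
  | .leaf => 0
  | .node a b => consNat (enc a) (enc b)

/-- Decoding a positive natural into the pair it is `consNat` of. -/
def dec (n : ℕ) : ℕ × ℕ :=
  if Even n then (n.factorization 2 - 1, n / 2 ^ n.factorization 2)
  else ((n+1).factorization 2 - 1, (n+1) / 2 ^ (n+1).factorization 2 - 1)

lemma two_le_two_pow_succ (k : ℕ) : 2 ≤ 2 ^ (k+1) := by
  calc 2 = 2 ^ 1 := (pow_one 2).symm
    _ ≤ 2 ^ (k+1) := Nat.pow_le_pow_right (by norm_num) (by omega)

lemma even_two_pow_mul (k m : ℕ) : Even (2 ^ (k+1) * m) :=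
  ⟨2 ^ k * m, by rw [pow_succ]; ring⟩

lemma consNat_pos (i j : ℕ) : 0 < consNat i j := by
  unfold consNat
  split
  · rename_i h
    have : 0 < j := h.pos
    positivity
  · have : 2 ≤ 2 ^ (i+1) * (j+1) :=
      le_mul_of_le_of_one_le (two_le_two_pow_succ i) (by omega)
    omega

lemma factorization_pow_mul_odd (i j : ℕ) (hj : Odd j) :
    (2 ^ (i+1) * j).factorization 2 = i + 1 := by
  have hj0 : j ≠ 0 := by rintro rfl; simp [Nat.odd_iff] at hj
  rw [Nat.factorization_mul (by positivity) hj0]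
  have h2 : ¬ (2 ∣ j) := by
    rw [Nat.two_dvd_ne_zero]; exact Nat.odd_iff.mp hj
  simp [Nat.Prime.factorization_pow, Nat.prime_two,
    Nat.factorization_eq_zero_of_not_dvd h2]

lemma dec_consNat (i j : ℕ) : dec (consNat i j) = (i, j) := by
  rcases Nat.even_or_odd j with hj | hj
  · -- j even
    have hcons : consNat i j = 2 ^ (i+1) * (j+1) - 1 := by
      unfold consNat; simp [Nat.not_odd_iff_even.mpr hj]
    have h2 : 2 ≤ 2 ^ (i+1) * (j+1) :=
      le_mul_of_le_of_one_le (two_le_two_pow_succ i) (by omega)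
    have hodd : ¬ Even (consNat i j) := by
      rw [hcons]
      have : Even (2 ^ (i+1) * (j+1)) := even_two_pow_mul i (j+1)
      rw [Nat.even_sub (by omega)]
      simp [this]
    have hsucc : consNat i j + 1 = 2 ^ (i+1) * (j+1) := by omega
    have hfac : (consNat i j + 1).factorization 2 = i + 1 := by
      rw [hsucc]; exact factorization_pow_mul_odd i (j+1) (Even.add_one hj)
    unfold dec
    rw [if_neg hodd, hfac, hsucc]
    simp [Nat.mul_div_cancel_left]
  · -- j odd
    have hcons : consNat i j = 2 ^ (i+1) * j := by unfold consNat; simp [hj]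
    have heven : Even (consNat i j) := by
      rw [hcons]; exact even_two_pow_mul i j
    have hfac : (consNat i j).factorization 2 = i + 1 := by
      rw [hcons]; exact factorization_pow_mul_odd i j hj
    unfold dec
    rw [if_pos heven, hfac, hcons]
    simp [Nat.mul_div_cancel_left]

lemma consNat_dec (n : ℕ) (hn : n ≠ 0) : consNat (dec n).1 (dec n).2 = n := by
  rcases Nat.even_or_odd n with h | h
  · set k := n.factorization 2 with hk
    have hkpos : 0 < k := Nat.Prime.factorization_pos_of_dvd Nat.prime_two hn h.two_dvd
    have hdvd : 2 ^ k ∣ n := Nat.ordProj_dvd n 2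
    have hndvd : ¬ 2 ∣ n / 2 ^ k := Nat.not_dvd_ordCompl Nat.prime_two hn
    have hjodd : Odd (n / 2 ^ k) := Nat.odd_iff.mpr (by omega)
    have hdec : dec n = (k - 1, n / 2 ^ k) := by unfold dec; rw [if_pos h]
    rw [hdec]
    unfold consNat
    rw [if_pos hjodd]
    have : k - 1 + 1 = k := by omega
    rw [this]
    exact Nat.ordProj_mul_ordCompl_eq_self n 2
  · set k := (n+1).factorization 2 with hk
    have hev : Even (n+1) := by simpa using h.add_one
    have hkpos : 0 < k :=
      Nat.Prime.factorization_pos_of_dvd Nat.prime_two (by omega) hev.two_dvd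
    have hdvd : 2 ^ k ∣ n + 1 := Nat.ordProj_dvd (n+1) 2
    have hqpos : 0 < (n+1) / 2 ^ k := Nat.div_pos (Nat.le_of_dvd (by omega) hdvd) (by positivity)
    have hndvd : ¬ 2 ∣ (n+1) / 2 ^ k := Nat.not_dvd_ordCompl Nat.prime_two (by omega)
    have hjev : ¬ Odd ((n+1) / 2 ^ k - 1) := by
      rw [Nat.odd_iff]; omega
    have hdec : dec n = (k - 1, (n+1) / 2 ^ k - 1) := by
      unfold dec; rw [if_neg (Nat.not_even_iff_odd.mpr h)]
    rw [hdec]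
    unfold consNat
    rw [if_neg hjev]
    have h1 : k - 1 + 1 = k := by omega
    have h2 : (n+1) / 2 ^ k - 1 + 1 = (n+1) / 2 ^ k := by omega
    rw [h1, h2]
    have heq := Nat.ordProj_mul_ordCompl_eq_self (n+1) 2
    rw [← hk] at heq
    omega

lemma dec_fst_lt (n : ℕ) (hn : n ≠ 0) : (dec n).1 < n := by
  have h := consNat_dec n hn
  have : (dec n).1 < consNat (dec n).1 (dec n).2 := by
    unfold consNat
    have hp : (dec n).1 + 1 < 2 ^ ((dec n).1 + 1) := Nat.lt_two_pow_self
    split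
    · rename_i hj
      have h1 : 1 ≤ (dec n).2 := hj.pos
      have h2 : 2 ^ ((dec n).1 + 1) ≤ 2 ^ ((dec n).1 + 1) * (dec n).2 :=
        Nat.le_mul_of_pos_right _ (by omega)
      omega
    · have : 2 ^ ((dec n).1 + 1) ≤ 2 ^ ((dec n).1 + 1) * ((dec n).2 + 1) :=
        Nat.le_mul_of_pos_right _ (by omega)
      omega
  omega

lemma dec_snd_lt (n : ℕ) (hn : n ≠ 0) : (dec n).2 < n := by
  have h := consNat_dec n hn
  have : (dec n).2 < consNat (dec n).1 (dec n).2 := by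
    unfold consNat
    have hp : 2 ≤ 2 ^ ((dec n).1 + 1) := two_le_two_pow_succ _
    split
    · rename_i hj
      have h1 : 1 ≤ (dec n).2 := hj.pos
      calc (dec n).2 < 2 * (dec n).2 := by omega
        _ ≤ 2 ^ ((dec n).1 + 1) * (dec n).2 := Nat.mul_le_mul_right _ hp
    · have : 2 * ((dec n).2 + 1) ≤ 2 ^ ((dec n).1 + 1) * ((dec n).2 + 1) :=
        Nat.mul_le_mul_right _ hp
      omega
  omega

/-- Decoding naturals back to binary trees. -/
def dTree (n : ℕ) : BT :=
  if h : n = 0 then .leaf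
  else .node (dTree (dec n).1) (dTree (dec n).2)
  decreasing_by
  · exact dec_fst_lt n h
  · exact dec_snd_lt n h

lemma enc_dTree (n : ℕ) : enc (dTree n) = n := by
  induction n using Nat.strong_induction_on with
  | _ n ih =>
    rw [dTree]
    split
    · rename_i h; simp [enc, h]
    · rename_i h
      simp only [enc]
      rw [ih _ (dec_fst_lt n h), ih _ (dec_snd_lt n h)]
      exact consNat_dec n h

lemma dTree_enc (t : BT) : dTree (enc t) = t := by
  induction t with
  | leaf => rw [enc, dTree]; simp
  | node a b iha ihb =>
    rw [enc, dTree, dif_neg (consNat_pos (enc a) (enc b)).ne', dec_consNat]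
    simp [iha, ihb]

theorem enc_bijective : Function.Bijective enc := by
  constructor
  · intro a b h
    have := congrArg dTree h
    rwa [dTree_enc, dTree_enc] at this
  · intro n
    exact ⟨dTree n, enc_dTree n⟩
end

section
/- The maps b2c and c2b are mutually inverse; in particular, b2c is a bijection between de Bruijn lambda terms and compressed de Bruijn terms. -/
/-- De Bruijn lambda terms. -/
inductive DB where
  | v : ℕ → DB
  | l : DB → DB
  | a : DB → DB → DB

/-- Compressed de Bruijn terms. -/
inductive CDB where
  | v : ℕ → ℕ → CDB
  | a : ℕ → CDB → CDB → CDB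

/-- Increment the binder count at the root of a compressed term. -/
def bump : CDB → CDB
  | .v k m => .v (k + 1) m
  | .a k x y => .a (k + 1) x y

/-- From de Bruijn terms to compressed de Bruijn terms. -/
def b2c : DB → CDB
  | .v m => .v 0 m
  | .a t u => .a 0 (b2c t) (b2c u)
  | .l t => bump (b2c t)

/-- Wrap `k` lambda abstractions around a de Bruijn term. -/
def iterL : ℕ → DB → DB
  | 0, t => t
  | k + 1, t => .l (iterL k t)

/-- From compressed de Bruijn terms to de Bruijn terms. -/
def c2b : CDB → DB
  | .v k m => iterL k (.v m)
  | .a k x y => iterL k (.a (c2b x) (c2b y))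
lemma c2b_bump (x : CDB) : c2b (bump x) = .l (c2b x) := by
  cases x <;> simp [bump, c2b, iterL]

lemma left_inv : ∀ t, c2b (b2c t) = t := by
  intro t
  induction t with
  | v m => rfl
  | l t ih => rw [b2c, c2b_bump, ih]
  | a t u ih1 ih2 => simp [b2c, c2b, iterL, ih1, ih2]

lemma b2c_iterL (k : ℕ) (t : DB) : b2c (iterL k t) = bump^[k] (b2c t) := by
  induction k with
  | zero => rfl
  | succ k ih => simp [iterL, b2c, ih, Function.iterate_succ_apply']

lemma bump_iter_v (k m : ℕ) : bump^[k] (.v 0 m) = CDB.v k m := by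
  induction k with
  | zero => rfl
  | succ k ih => rw [Function.iterate_succ_apply', ih]; rfl

lemma bump_iter_a (k : ℕ) (x y : CDB) : bump^[k] (.a 0 x y) = CDB.a k x y := by
  induction k with
  | zero => rfl
  | succ k ih => rw [Function.iterate_succ_apply', ih]; rfl

lemma right_inv : ∀ x, b2c (c2b x) = x := by
  intro x
  induction x with
  | v k m => rw [c2b, b2c_iterL]; exact bump_iter_v k m
  | a k x y ih1 ih2 => rw [c2b, b2c_iterL, b2c, ih1, ih2]; exact bump_iter_a k x y

theorem b2c_c2b_inverse :
    Function.LeftInverse c2b b2c ∧ Function.RightInverse c2b b2c ∧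
      Function.Bijective b2c := by
  refine ⟨left_inv, right_inv, ?_⟩
  exact Function.bijective_iff_has_inverse.mpr ⟨c2b, left_inv, right_inv⟩
end

section
/- For every n ≥ 1, the generalized Cantor n-tupling function K_n : ℕ^n → ℕ is a bijection. -/
/-- The generalized Cantor n-tupling function
`K_n(x_1,…,x_n) = Σ_{k=1}^n C(k-1+s_k, k)` where `s_k = x_1 + ⋯ + x_k`. -/
def cantorTuple (n : ℕ) (x : Fin n → ℕ) : ℕ :=
  ∑ k : Fin n, Nat.choose (k.val + ∑ i : Fin n, if i ≤ k then x i else 0) (k.val + 1)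

/-- List version: the list is the reverse of `(x_1,…,x_n)`. -/
def cantorK : List ℕ → ℕ
  | [] => 0
  | x :: xs => Nat.choose (xs.length + (x + xs.sum)) (xs.length + 1) + cantorK xs

lemma cantorK_lt (l : List ℕ) : cantorK l < Nat.choose (l.length + l.sum) l.length := by
  induction l with
  | nil => simp [cantorK]
  | cons x xs ih =>
    simp only [cantorK, List.length_cons, List.sum_cons]
    have h1 : cantorK xs < Nat.choose (xs.length + (x + xs.sum)) xs.length :=
      lt_of_lt_of_le ih (Nat.choose_le_choose _ (by omega))
    have h2 : Nat.choose (xs.length + (x + xs.sum) + 1) (xs.length + 1)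
        = Nat.choose (xs.length + (x + xs.sum)) xs.length
          + Nat.choose (xs.length + (x + xs.sum)) (xs.length + 1) :=
      Nat.choose_succ_succ _ _
    have h3 : xs.length + 1 + (x + xs.sum) = xs.length + (x + xs.sum) + 1 := by omega
    rw [h3, h2]
    omega

lemma cantorK_ge (x : ℕ) (xs : List ℕ) :
    Nat.choose (xs.length + (x + xs.sum)) (xs.length + 1) ≤ cantorK (x :: xs) :=
  Nat.le_add_right _ _

lemma cantorK_sum_le {x y : ℕ} {xs ys : List ℕ} (hl : xs.length = ys.length)
    (h : cantorK (x :: xs) = cantorK (y :: ys)) : x + xs.sum ≤ y + ys.sum := by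
  by_contra hs
  push_neg at hs
  have h1 := cantorK_lt (y :: ys)
  have h2 := cantorK_ge x xs
  simp only [List.length_cons, List.sum_cons] at h1
  have h3 : xs.length + 1 + (y + ys.sum) ≤ xs.length + (x + xs.sum) := by omega
  have h4 : Nat.choose (ys.length + 1 + (y + ys.sum)) (ys.length + 1)
      ≤ Nat.choose (xs.length + (x + xs.sum)) (xs.length + 1) := by
    rw [← hl]; exact Nat.choose_le_choose _ h3
  omega

lemma cantorK_inj : ∀ l1 l2 : List ℕ, l1.length = l2.length →
    cantorK l1 = cantorK l2 → l1 = l2 := by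
  intro l1
  induction l1 with
  | nil => intro l2 hl _; exact (List.length_eq_zero_iff.mp hl.symm).symm
  | cons x xs ih =>
    intro l2 hl h
    match l2 with
    | y :: ys =>
      simp only [List.length_cons, add_left_inj] at hl
      have hs : x + xs.sum = y + ys.sum :=
        le_antisymm (cantorK_sum_le hl h) (cantorK_sum_le hl.symm h.symm)
      have hK : cantorK xs = cantorK ys := by
        simp only [cantorK, hl, hs] at h
        omega
      have hxy : xs = ys := ih ys hl hK
      have : x = y := by rw [hxy] at hs; omega
      rw [this, hxy]

lemma choose_strictMono (n : ℕ) : StrictMono (fun t => Nat.choose (n + t) (n + 1)) := by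
  apply strictMono_nat_of_lt_succ
  intro t
  have h : Nat.choose (n + (t + 1)) (n + 1)
      = Nat.choose (n + t) n + Nat.choose (n + t) (n + 1) := by
    have he : n + (t + 1) = n + t + 1 := by omega
    rw [he, Nat.choose_succ_succ]
  have hpos : 0 < Nat.choose (n + t) n := Nat.choose_pos (by omega)
  show Nat.choose (n + t) (n + 1) < Nat.choose (n + (t + 1)) (n + 1)
  omega

lemma cantorK_surj : ∀ n N : ℕ, 1 ≤ n → ∃ l : List ℕ, l.length = n ∧ cantorK l = N := by
  intro n
  induction n with
  | zero => intro N h; omega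
  | succ m ih =>
    intro N _
    rcases Nat.eq_zero_or_pos m with hm | hm
    · subst hm
      exact ⟨[N], rfl, by simp [cantorK]⟩
    · -- find greatest s with choose (m + s) (m+1) ≤ N
      have hex : ∃ t, N < Nat.choose (m + t) (m + 1) := by
        refine ⟨N + 1, ?_⟩
        have h2 : N + 1 ≤ Nat.choose (m + (N + 1)) (m + 1) := (choose_strictMono m).le_apply
        omega
      have ht0pos : 0 < Nat.find hex := by
        rcases Nat.eq_zero_or_pos (Nat.find hex) with h0 | h0
        · exfalso
          have hspec := Nat.find_spec hex
          rw [h0] at hspec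
          have hz : Nat.choose (m + 0) (m + 1) = 0 := Nat.choose_eq_zero_of_lt (by omega)
          omega
        · exact h0
      set s := Nat.find hex - 1 with hs
      have hle : Nat.choose (m + s) (m + 1) ≤ N := by
        have := Nat.find_min hex (m := s) (by omega)
        omega
      have hlt : N < Nat.choose (m + s + 1) (m + 1) := by
        have hspec := Nat.find_spec hex
        have he : m + Nat.find hex = m + s + 1 := by omega
        rwa [he] at hspec
      have hpascal : Nat.choose (m + s + 1) (m + 1)
          = Nat.choose (m + s) m + Nat.choose (m + s) (m + 1) := Nat.choose_succ_succ _ _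
      obtain ⟨xs, hxl, hxK⟩ := ih (N - Nat.choose (m + s) (m + 1)) hm
      have hsum : xs.sum ≤ s := by
        by_contra hss
        push_neg at hss
        cases xs with
        | nil => simp at hxl; omega
        | cons a as =>
          have h1 := cantorK_ge a as
          simp only [List.length_cons] at hxl
          simp only [List.sum_cons] at hss
          have h3 : Nat.choose (m + s) m
              ≤ Nat.choose (as.length + (a + as.sum)) (as.length + 1) := by
            have he : (m : ℕ) = as.length + 1 := by omega
            rw [he]
            exact Nat.choose_le_choose _ (by omega)
          omega
      refine ⟨(s - xs.sum) :: xs, by simp [hxl], ?_⟩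
      simp only [cantorK, hxl, hxK, List.length_cons]
      have he : s - xs.sum + xs.sum = s := by omega
      rw [he]
      omega

lemma cantorTuple_eq_cantorK (n : ℕ) (x : Fin n → ℕ) :
    cantorTuple n x = cantorK (List.ofFn x).reverse := by
  induction n with
  | zero => simp [cantorTuple, cantorK]
  | succ m ih =>
    rw [List.ofFn_succ' x, List.concat_eq_append, List.reverse_append]
    simp only [List.reverse_cons, List.reverse_nil, List.nil_append, List.singleton_append]
    simp only [cantorK]
    simp only [List.length_reverse, List.length_ofFn, List.sum_reverse, List.sum_ofFn]
    rw [← ih (fun i => x (Fin.castSucc i))]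
    have hA : cantorTuple (m + 1) x
        = cantorTuple m (fun i => x (Fin.castSucc i))
          + Nat.choose (m + ∑ i : Fin (m + 1), x i) (m + 1) := by
      simp only [cantorTuple]
      rw [Fin.sum_univ_castSucc]
      congr 1
      · apply Finset.sum_congr rfl
        intro k _
        congr 2
        rw [Fin.sum_univ_castSucc]
        have hlast : ¬ (Fin.last m ≤ Fin.castSucc k) := by
          have := k.isLt
          simp only [Fin.le_def, Fin.val_last, Fin.coe_castSucc]
          omega
        rw [if_neg hlast, add_zero]
        apply Finset.sum_congr rfl
        intro i _
        simp [Fin.castSucc_le_castSucc_iff]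
      · simp only [Fin.val_last]
        congr 2
        apply Finset.sum_congr rfl
        intro i _
        rw [if_pos (Fin.le_last i)]
    rw [hA]
    have hB : (∑ i : Fin (m + 1), x i)
        = (∑ i : Fin m, x (Fin.castSucc i)) + x (Fin.last m) := Fin.sum_univ_castSucc x
    rw [hB]
    have hc : m + ((∑ i : Fin m, x (Fin.castSucc i)) + x (Fin.last m))
        = m + (x (Fin.last m) + ∑ i : Fin m, x (Fin.castSucc i)) := by omega
    rw [hc]
    omega

theorem cantorTuple_bijective (n : ℕ) (hn : 1 ≤ n) :
    Function.Bijective (cantorTuple n) := by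
  constructor
  · intro x y h
    rw [cantorTuple_eq_cantorK, cantorTuple_eq_cantorK] at h
    have h1 := cantorK_inj _ _ (by simp) h
    have h2 := List.reverse_injective h1
    exact List.ofFn_injective h2
  · intro N
    obtain ⟨l, hl, hK⟩ := cantorK_surj n N hn
    have hlen : l.reverse.length = n := by simp [hl]
    refine ⟨fun i => l.reverse.get (Fin.cast hlen.symm i), ?_⟩
    rw [cantorTuple_eq_cantorK]
    have hofn : List.ofFn (fun i : Fin n => l.reverse.get (Fin.cast hlen.symm i)) = l.reverse := by
      apply List.ext_get (by simp [hlen])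
      intro i h1 h2
      simp
    rw [hofn, List.reverse_reverse, hK]
end

section
/- For every n and all (x_1,…,x_n) ∈ ℕ^n, K_n(x_1,…,x_n) < C(n + s_n, n), where s_n = x_1 + ⋯ + x_n; hence the value of the generalized Cantor n-tupling function is bounded polynomially (with degree n) in the sum of its arguments. -/
lemma cantorTuple_succ (n : ℕ) (x : Fin (n+1) → ℕ) :
    cantorTuple (n+1) x =
      cantorTuple n (x ∘ Fin.castSucc) + Nat.choose (n + ∑ i : Fin (n+1), x i) (n+1) := by
  unfold cantorTuple
  rw [Fin.sum_univ_castSucc]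
  congr 1
  · apply Finset.sum_congr rfl
    intro k _
    congr 1
    rw [Fin.sum_univ_castSucc]
    have hlast : ¬ (Fin.last n ≤ Fin.castSucc k) := by
      simp [Fin.le_def, Nat.lt_succ_iff, Nat.succ_le_iff, k.isLt]
    rw [if_neg hlast, add_zero]
    simp [Fin.castSucc_le_castSucc_iff]
  · congr 1
    · congr 1
      apply Finset.sum_congr rfl
      intro i _
      rw [if_pos (Fin.le_last i)]

theorem cantorTuple_lt_choose (n : ℕ) (x : Fin n → ℕ) :
    cantorTuple n x < Nat.choose (n + ∑ i : Fin n, x i) n := by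
  induction n with
  | zero => simp [cantorTuple]
  | succ n ih =>
    rw [cantorTuple_succ]
    have h1 : cantorTuple n (x ∘ Fin.castSucc) <
        Nat.choose (n + ∑ i : Fin n, x (Fin.castSucc i)) n := ih _
    have hsum : (∑ i : Fin n, x (Fin.castSucc i)) ≤ ∑ i : Fin (n+1), x i := by
      rw [Fin.sum_univ_castSucc]
      exact Nat.le_add_right _ _
    have h2 : Nat.choose (n + ∑ i : Fin n, x (Fin.castSucc i)) n ≤
        Nat.choose (n + ∑ i : Fin (n+1), x i) n :=
      Nat.choose_le_choose n (Nat.add_le_add_left hsum n)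
    have hpascal : Nat.choose (n + 1 + ∑ i : Fin (n+1), x i) (n+1) =
        Nat.choose (n + ∑ i : Fin (n+1), x i) n +
          Nat.choose (n + ∑ i : Fin (n+1), x i) (n+1) := by
      have : n + 1 + ∑ i : Fin (n+1), x i = (n + ∑ i : Fin (n+1), x i) + 1 := by ring
      rw [this, Nat.choose_succ_succ]
    rw [hpascal]
    exact Nat.add_lt_add_right (lt_of_lt_of_le h1 h2) _
end

section
/- The map rank is a bijection between de Bruijn lambda terms and binary trees. -/
instance : Inhabited BT := ⟨BT.leaf⟩

lemma pow2_odd_inj : ∀ a b m m' : ℕ, Odd m → Odd m' → 2 ^ a * m = 2 ^ b * m' →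
    a = b ∧ m = m' := by
  intro a
  induction a with
  | zero =>
    intro b m m' hm hm' h
    cases b with
    | zero => simpa using h
    | succ b =>
      exfalso
      have : 2 ∣ m := by
        rw [pow_zero, one_mul] at h
        rw [h, pow_succ]
        exact ⟨2^b * m', by ring⟩
      rw [Nat.odd_iff, ← Nat.two_dvd_ne_zero] at hm
      exact hm this
  | succ a ih =>
    intro b m m' hm hm' h
    cases b with
    | zero =>
      exfalso
      have : 2 ∣ m' := by
        rw [pow_zero, one_mul] at h
        rw [← h, pow_succ]
        exact ⟨2^a * m, by ring⟩
      rw [Nat.odd_iff, ← Nat.two_dvd_ne_zero] at hm'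
      exact hm' this
    | succ b =>
      have h2 : 2 ^ a * m = 2 ^ b * m' := by
        have := h
        rw [pow_succ, pow_succ, mul_right_comm, mul_right_comm (2^b)] at this
        exact Nat.eq_of_mul_eq_mul_right (by norm_num) this
      obtain ⟨h1, h2⟩ := ih b m m' hm hm' h2
      exact ⟨by omega, h2⟩

lemma consNat_inj {i j i' j' : ℕ} (h : consNat i j = consNat i' j') : i = i' ∧ j = j' := by
  unfold consNat at h
  have h2 : ∀ k : ℕ, 2 ≤ 2 ^ (k + 1) := fun k => by
    calc 2 = 2^1 := by norm_num
    _ ≤ 2 ^ (k+1) := Nat.pow_le_pow_right (by norm_num) (by omega)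
  split at h <;> split at h
  · rename_i hj hj'
    obtain ⟨h1, h2⟩ := pow2_odd_inj _ _ _ _ hj hj' h
    exact ⟨by omega, h2⟩
  · rename_i hj hj'
    exfalso
    have hjo : Even (2 ^ (i+1) * j) := by
      exact (Nat.even_pow.mpr ⟨even_two, by omega⟩).mul_right j
    have : Odd (2 ^ (i'+1) * (j'+1) - 1) := by
      have he : Even (2 ^ (i'+1) * (j'+1)) :=
        (Nat.even_pow.mpr ⟨even_two, by omega⟩).mul_right _
      have hge : 2 ≤ 2 ^ (i'+1) * (j'+1) :=
        le_trans (h2 i') (Nat.le_mul_of_pos_right _ (by omega))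
      rw [Nat.odd_iff]; rw [Nat.even_iff] at he; omega
    rw [h] at hjo
    rw [Nat.even_iff] at hjo; rw [Nat.odd_iff] at this; omega
  · rename_i hj hj'
    exfalso
    have hjo : Even (2 ^ (i'+1) * j') :=
      (Nat.even_pow.mpr ⟨even_two, by omega⟩).mul_right j'
    have : Odd (2 ^ (i+1) * (j+1) - 1) := by
      have he : Even (2 ^ (i+1) * (j+1)) :=
        (Nat.even_pow.mpr ⟨even_two, by omega⟩).mul_right _
      have hge : 2 ≤ 2 ^ (i+1) * (j+1) :=
        le_trans (h2 i) (Nat.le_mul_of_pos_right _ (by omega))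
      rw [Nat.odd_iff]; rw [Nat.even_iff] at he; omega
    rw [← h] at hjo
    rw [Nat.even_iff] at hjo; rw [Nat.odd_iff] at this; omega
  · rename_i hj hj'
    have hge : 2 ≤ 2 ^ (i+1) * (j+1) :=
      le_trans (h2 i) (Nat.le_mul_of_pos_right _ (by omega))
    have hge' : 2 ≤ 2 ^ (i'+1) * (j'+1) :=
      le_trans (h2 i') (Nat.le_mul_of_pos_right _ (by omega))
    have heq : 2 ^ (i+1) * (j+1) = 2 ^ (i'+1) * (j'+1) := by omega
    obtain ⟨h1, h2⟩ := pow2_odd_inj _ _ _ _ (Even.add_one (Nat.not_odd_iff_even.mp hj))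
      (Even.add_one (Nat.not_odd_iff_even.mp hj')) heq
    exact ⟨by omega, by omega⟩

lemma enc_inj : Function.Injective enc := by
  intro T1
  induction T1 with
  | leaf =>
    intro T2 h
    cases T2 with
    | leaf => rfl
    | node a b =>
      exfalso
      have := consNat_pos (enc a) (enc b)
      simp only [enc] at h
      omega
  | node a b iha ihb =>
    intro T2 h
    cases T2 with
    | leaf =>
      exfalso
      have := consNat_pos (enc a) (enc b)
      simp only [enc] at h
      omega
    | node a' b' =>
      simp only [enc] at h
      obtain ⟨h1, h2⟩ := consNat_inj h
      rw [iha h1, ihb h2]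

lemma two_le_two_pow (k : ℕ) : 2 ≤ 2 ^ (k + 1) := by
  calc (2:ℕ) = 2^1 := by norm_num
  _ ≤ 2 ^ (k+1) := Nat.pow_le_pow_right (by norm_num) (by omega)

lemma enc_surj : Function.Surjective enc := by
  intro n
  induction n using Nat.strong_induction_on with
  | _ n ih =>
  rcases Nat.eq_zero_or_pos n with rfl | hn
  · exact ⟨.leaf, rfl⟩
  rcases Nat.even_or_odd n with he | ho
  · -- n even, n = 2^v * m, m odd
    set v := n.factorization 2 with hv
    have hn0 : n ≠ 0 := by omega
    have hdvd : 2 ^ v ∣ n := Nat.ordProj_dvd n 2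
    have hself : 2 ^ v * (n / 2 ^ v) = n := Nat.ordProj_mul_ordCompl_eq_self n 2
    set m := n / 2 ^ v with hm
    have hmodd : Odd m := by
      rw [Nat.odd_iff, ← Nat.two_dvd_ne_zero]
      exact Nat.not_dvd_ordCompl Nat.prime_two hn0
    have hv1 : 1 ≤ v := (Nat.Prime.factorization_pos_of_dvd Nat.prime_two hn0
      (even_iff_two_dvd.mp he))
    have hvltn : v < n := lt_of_lt_of_le (Nat.lt_two_pow_self (n := v)) (Nat.le_of_dvd hn hdvd)
    have hm1 : 1 ≤ m := by
      rcases Nat.eq_zero_or_pos m with h0 | h; · rw [h0, mul_zero] at hself; omega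
      exact h
    have h2v : 2 ≤ 2 ^ v := by
      calc (2:ℕ) = 2^1 := by norm_num
      _ ≤ 2 ^ v := Nat.pow_le_pow_right (by norm_num) hv1
    have hmltn : m < n := by
      have : m * 2 ≤ m * 2 ^ v := Nat.mul_le_mul_left m h2v
      nlinarith [hself]
    obtain ⟨A, hA⟩ := ih (v - 1) (by omega)
    obtain ⟨B, hB⟩ := ih m hmltn
    refine ⟨.node A B, ?_⟩
    simp only [enc, hA, hB, consNat, if_pos hmodd]
    rw [Nat.sub_add_cancel hv1]
    exact hself
  · -- n odd, n + 1 = 2^v * m, m odd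
    set k := n + 1 with hk
    have hk0 : k ≠ 0 := by omega
    set v := k.factorization 2 with hv
    have hdvd : 2 ^ v ∣ k := Nat.ordProj_dvd k 2
    have hself : 2 ^ v * (k / 2 ^ v) = k := Nat.ordProj_mul_ordCompl_eq_self k 2
    set m := k / 2 ^ v with hm
    have hmodd : Odd m := by
      rw [Nat.odd_iff, ← Nat.two_dvd_ne_zero]
      exact Nat.not_dvd_ordCompl Nat.prime_two hk0
    have hke : Even k := Odd.add_one ho
    have hv1 : 1 ≤ v := (Nat.Prime.factorization_pos_of_dvd Nat.prime_two hk0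
      (even_iff_two_dvd.mp hke))
    have hvltk : v < k := lt_of_lt_of_le (Nat.lt_two_pow_self (n := v)) (Nat.le_of_dvd (by omega) hdvd)
    have hm1 : 1 ≤ m := by
      rcases Nat.eq_zero_or_pos m with h0 | h; · rw [h0, mul_zero] at hself; omega
      exact h
    have h2v : 2 ≤ 2 ^ v := by
      calc (2:ℕ) = 2^1 := by norm_num
      _ ≤ 2 ^ v := Nat.pow_le_pow_right (by norm_num) hv1
    have hmlek : m * 2 ≤ k := by
      have : m * 2 ≤ m * 2 ^ v := Nat.mul_le_mul_left m h2v
      nlinarith [hself]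
    obtain ⟨A, hA⟩ := ih (v - 1) (by omega)
    obtain ⟨B, hB⟩ := ih (m - 1) (by omega)
    refine ⟨.node A B, ?_⟩
    have hmeven : ¬ Odd (m - 1) := by
      rw [Nat.odd_iff] at hmodd ⊢; omega
    simp only [enc, hA, hB, consNat, if_neg hmeven]
    rw [Nat.sub_add_cancel hv1, Nat.sub_add_cancel hm1, hself]
    omega

/-- The decoding of natural numbers as binary trees: the inverse of `enc`. -/
noncomputable def t : ℕ → BT := Function.invFun enc


lemma t_enc (T : BT) : t (enc T) = T := Function.leftInverse_invFun enc_inj T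

lemma enc_t (n : ℕ) : enc (t n) = n := Function.rightInverse_invFun enc_surj n

lemma t_ne_leaf {n : ℕ} (hn : n ≠ 0) : t n ≠ BT.leaf := by
  intro h
  have := enc_t n
  rw [h] at this
  simp [enc] at this
  omega

/-- The `rank` map from de Bruijn terms to binary trees. -/
noncomputable def rank : DB → BT
  | .v 0 => .leaf
  | .v (k + 1) => .node (t (k + 1)) .leaf
  | .l A => .node .leaf (rank A)
  | .a A B => .node (t (enc (rank A) + 1)) (t (enc (rank B) + 1))


lemma rank_inj : Function.Injective rank := by
  intro T1
  induction T1 with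
  | v k =>
    intro T2 h
    match k, T2 with
    | 0, .v 0 => rfl
    | 0, .v (k'+1) => simp [rank] at h
    | 0, .l A => simp [rank] at h
    | 0, .a A B => simp [rank] at h
    | k+1, .v 0 => simp [rank] at h
    | k+1, .v (k'+1) =>
      simp only [rank, BT.node.injEq] at h
      have := congrArg enc h.1
      rw [enc_t, enc_t] at this
      rw [this]
    | k+1, .l A =>
      simp only [rank, BT.node.injEq] at h
      exact absurd h.1 (t_ne_leaf (by omega))
    | k+1, .a A B =>
      simp only [rank, BT.node.injEq] at h
      exact absurd h.2.symm (t_ne_leaf (by omega))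
  | l A ih =>
    intro T2 h
    match T2 with
    | .v 0 => simp [rank] at h
    | .v (k'+1) =>
      simp only [rank, BT.node.injEq] at h
      exact absurd h.1.symm (t_ne_leaf (by omega))
    | .l A' =>
      simp only [rank, BT.node.injEq] at h
      rw [ih h.2]
    | .a A' B' =>
      simp only [rank, BT.node.injEq] at h
      exact absurd h.1.symm (t_ne_leaf (by omega))
  | a A B ihA ihB =>
    intro T2 h
    match T2 with
    | .v 0 => simp [rank] at h
    | .v (k'+1) =>
      simp only [rank, BT.node.injEq] at h
      exact absurd h.2 (t_ne_leaf (by omega))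
    | .l A' =>
      simp only [rank, BT.node.injEq] at h
      exact absurd h.1 (t_ne_leaf (by omega))
    | .a A' B' =>
      simp only [rank, BT.node.injEq] at h
      have h1 := congrArg enc h.1
      have h2 := congrArg enc h.2
      rw [enc_t, enc_t] at h1 h2
      have hA : rank A = rank A' := enc_inj (by omega)
      have hB : rank B = rank B' := enc_inj (by omega)
      rw [ihA hA, ihB hB]

lemma lt_consNat_left (i j : ℕ) : i < consNat i j := by
  unfold consNat
  have h1 := two_le_two_pow i
  have h2 : i + 1 < 2 ^ (i + 1) := Nat.lt_two_pow_self (n := i + 1)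
  split
  · rename_i hj
    have hj1 : 1 ≤ j := Nat.pos_of_ne_zero (by rintro rfl; simp at hj)
    calc i < 2 ^ (i+1) := by omega
    _ = 2 ^ (i+1) * 1 := by ring
    _ ≤ 2 ^ (i+1) * j := Nat.mul_le_mul_left _ hj1
  · have : 2 ^ (i+1) * 1 ≤ 2 ^ (i+1) * (j+1) := Nat.mul_le_mul_left _ (by omega)
    omega

lemma lt_consNat_right (i j : ℕ) : j < consNat i j := by
  unfold consNat
  have h1 := two_le_two_pow i
  split
  · rename_i hj
    have hj1 : 1 ≤ j := Nat.pos_of_ne_zero (by rintro rfl; simp at hj)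
    have h2 : 2 * j ≤ 2 ^ (i+1) * j := Nat.mul_le_mul_right _ h1
    omega
  · have : 2 * (j+1) ≤ 2 ^ (i+1) * (j+1) := Nat.mul_le_mul_right _ h1
    omega

lemma rank_surj_aux : ∀ n : ℕ, ∃ T, rank T = t n := by
  intro n
  induction n using Nat.strong_induction_on with
  | _ n ih =>
  rcases Nat.eq_zero_or_pos n with rfl | hn
  · refine ⟨.v 0, ?_⟩
    have : t 0 = BT.leaf := by
      have := t_enc BT.leaf
      simpa [enc] using this
    rw [this]; rfl
  · obtain ⟨b, c, hbc⟩ : ∃ b c, t n = BT.node b c := by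
      cases htn : t n with
      | leaf => exact absurd htn (t_ne_leaf (by omega))
      | node b c => exact ⟨b, c, rfl⟩
    have hne : n = consNat (enc b) (enc c) := by
      have := enc_t n
      rw [hbc] at this
      simp [enc] at this
      omega
    have hbn : enc b < n := hne ▸ lt_consNat_left _ _
    have hcn : enc c < n := hne ▸ lt_consNat_right _ _
    cases b with
    | leaf =>
      obtain ⟨A, hA⟩ := ih (enc c) hcn
      refine ⟨.l A, ?_⟩
      rw [hbc]
      simp only [rank, hA, t_enc]
    | node b1 b2 =>
      have hb0 : enc (BT.node b1 b2) ≠ 0 := by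
        have := consNat_pos (enc b1) (enc b2); simp [enc]; omega
      obtain ⟨p, hp⟩ : ∃ p, enc (BT.node b1 b2) = p + 1 := ⟨_, (Nat.succ_pred_eq_of_pos (by omega)).symm⟩
      cases c with
      | leaf =>
        refine ⟨.v (p + 1), ?_⟩
        rw [hbc]
        simp only [rank]
        rw [← hp, t_enc]
      | node c1 c2 =>
        have hc0 : enc (BT.node c1 c2) ≠ 0 := by
          have := consNat_pos (enc c1) (enc c2); simp [enc]; omega
        obtain ⟨q, hq⟩ : ∃ q, enc (BT.node c1 c2) = q + 1 := ⟨_, (Nat.succ_pred_eq_of_pos (by omega)).symm⟩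
        obtain ⟨A, hA⟩ := ih p (by omega)
        obtain ⟨B, hB⟩ := ih q (by omega)
        refine ⟨.a A B, ?_⟩
        rw [hbc]
        simp only [rank, hA, hB, enc_t]
        rw [← hp, ← hq, t_enc, t_enc]

theorem rank_bijective : Function.Bijective rank := by
  constructor
  · exact rank_inj
  · intro T
    obtain ⟨A, hA⟩ := rank_surj_aux (enc T)
    exact ⟨A, by rw [hA, t_enc]⟩
end
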